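/- Let R be a commutative ring and M an additive cancellative commutative monoid. Let t ≥ 1, let a_V and a_1, …, a_t be elements of M, and let V, V_1, …, V_t, N_1, …, N_t, L_1, …, L_{t+1} be elements of the additive monoid algebra R[M]. Assume: (i) L_1 = single(a_V, 1) * V; (ii) for every k with 1 ≤ k ≤ t, single(a_k, 1) * L_k = L_{k+1} * N_k; (iii) L_{t+1} = single(a_V, 1); (iv) for every k, N_k = single(a_k, 1) * V_k. Then V = V_1 * V_2 * ⋯ * V_t; equivalently, for every β ∈ M, V(β) = Σ_{β_1 + ⋯ + β_t = β} Π_{s=1}^t V_s(β_s). (This is the algebraic form of the paper's main Theorem 'reduction-primitive-twig': with M = NE(Y), V(β) = N(V, β) the count of primitive infinitesimal tropical cylinders of twig type (w_s), V_s(β) = N(V_s, β) the count for the elementary cylinder of twig type w_s, hypothesis (i) encodes the passage to the extended cylinder and the identification N(L_1, β) = N(V̂, β), hypothesis (ii) is the splitting formula of Proposition 'splitting-formula', hypothesis (iii) is the evaluation of N(L_{t+1}, ·) as a delta function from Proposition 'compute-L', and hypothesis (iv) encodes N(N_s, γ) = N(V_s, γ − δ̂_s).) -/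

import Mathlib

/-- Multiplication by `single c 1` is injective when the monoid is cancellative. -/
lemma single_one_mul_left_cancel {R : Type*} [CommRing R] {M : Type*} [AddCancelCommMonoid M]
    (c : M) {f g : AddMonoidAlgebra R M}
    (h : AddMonoidAlgebra.single c (1 : R) * f = AddMonoidAlgebra.single c (1 : R) * g) :
    f = g := by
  ext b
  have hf := AddMonoidAlgebra.coeff_single_mul_eq_mul_coeff (x := f) (r := (1 : R)) (m := c) (m₁ := c + b) b
    (fun a _ => ⟨fun h => add_left_cancel h, fun h => by rw [h]⟩)
  have hg := AddMonoidAlgebra.coeff_single_mul_eq_mul_coeff (x := g) (r := (1 : R)) (m := c) (m₁ := c + b) b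
    (fun a _ => ⟨fun h => add_left_cancel h, fun h => by rw [h]⟩)
  have := congrArg (fun x => x.coeff (c + b)) h
  simpa [hf, hg] using this

/-- Algebraic form of the main Theorem (`reduction-primitive-twig`).
Under hypotheses (i)-(iv), the cylinder counting function factors as
`V = V_1 * ⋯ * V_t` in `R[M]`, i.e. `N(V,β) = Σ_{β₁+⋯+β_t=β} Π_s N(V_s,β_s)`. -/
theorem reduction_primitive_twig (R : Type*) [CommRing R] (M : Type*) [AddCancelCommMonoid M]
    (t : ℕ) (ht : 1 ≤ t) (aV : M) (a : Fin t → M)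
    (V : AddMonoidAlgebra R M) (Vs N : Fin t → AddMonoidAlgebra R M)
    (L : Fin (t + 1) → AddMonoidAlgebra R M)
    (h1 : L 0 = AddMonoidAlgebra.single aV (1 : R) * V)
    (h2 : ∀ k : Fin t, AddMonoidAlgebra.single (a k) (1 : R) * L k.castSucc
        = L k.succ * N k)
    (h3 : L (Fin.last t) = AddMonoidAlgebra.single aV (1 : R))
    (h4 : ∀ k : Fin t, N k = AddMonoidAlgebra.single (a k) (1 : R) * Vs k) :
    V = ∏ k, Vs k := by
  classical
  set b : ℕ → M := fun n => if h : n < t then a ⟨n, h⟩ else 0 with hb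
  set W : ℕ → AddMonoidAlgebra R M := fun n => if h : n < t then Vs ⟨n, h⟩ else 1 with hW
  have key : ∀ j : ℕ, (hjle : j ≤ t) →
      AddMonoidAlgebra.single (∑ k ∈ Finset.range j, b k) (1 : R) * L 0
        = L ⟨j, by omega⟩ *
          ∏ k ∈ Finset.range j, (AddMonoidAlgebra.single (b k) (1 : R) * W k) := by
    intro j
    induction j with
    | zero =>
      intro _
      have h0 : (0 : Fin (t + 1)) = ⟨0, by omega⟩ := by ext; simp
      rw [Finset.sum_range_zero, Finset.prod_range_zero, ← AddMonoidAlgebra.one_def, one_mul,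
        mul_one, ← h0]
    | succ j ih =>
      intro hj
      have hjt : j < t := by omega
      have ihj := ih (by omega)
      have hbj : b j = a ⟨j, hjt⟩ := by simp [hb, hjt]
      have hWj : W j = Vs ⟨j, hjt⟩ := by simp [hW, hjt]
      have h2j := h2 ⟨j, hjt⟩
      have h4j := h4 ⟨j, hjt⟩
      have hcast : (⟨j, hjt⟩ : Fin t).castSucc = (⟨j, by omega⟩ : Fin (t + 1)) := rfl
      have hsucc : (⟨j, hjt⟩ : Fin t).succ = (⟨j + 1, by omega⟩ : Fin (t + 1)) := rfl
      have hsplit : AddMonoidAlgebra.single (b j + ∑ k ∈ Finset.range j, b k) (1 : R)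
          = AddMonoidAlgebra.single (b j) (1 : R) *
            AddMonoidAlgebra.single (∑ k ∈ Finset.range j, b k) (1 : R) := by
        rw [AddMonoidAlgebra.single_mul_single, one_mul]
      rw [Finset.sum_range_succ, Finset.prod_range_succ, add_comm, hsplit, mul_assoc, ihj,
        hbj, hWj, ← hcast, ← hsucc, ← mul_assoc, h2j, h4j]
      ring
  have keyt := key t le_rfl
  have hlast : (⟨t, by omega⟩ : Fin (t + 1)) = Fin.last t := rfl
  rw [hlast, h3, h1] at keyt
  have hprod : (∏ k ∈ Finset.range t,
      (AddMonoidAlgebra.single (b k) (1 : R) * W k))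
      = AddMonoidAlgebra.single (∑ k ∈ Finset.range t, b k) (1 : R) *
        ∏ k ∈ Finset.range t, W k := by
    rw [Finset.prod_mul_distrib, AddMonoidAlgebra.prod_single, Finset.prod_const_one]
  rw [hprod] at keyt
  have hWprod : (∏ k ∈ Finset.range t, W k) = ∏ k, Vs k := by
    rw [← Fin.prod_univ_eq_prod_range]
    exact Finset.prod_congr rfl fun i _ => by simp [hW, i.isLt, Fin.eta]
  have : AddMonoidAlgebra.single (∑ k ∈ Finset.range t, b k) (1 : R) *
      (AddMonoidAlgebra.single aV (1 : R) * V)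
      = AddMonoidAlgebra.single (∑ k ∈ Finset.range t, b k) (1 : R) *
      (AddMonoidAlgebra.single aV (1 : R) * ∏ k, Vs k) := by
    rw [keyt, hWprod]; ring
  have h5 := single_one_mul_left_cancel _ this
  exact single_one_mul_left_cancel _ h5
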